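/- Let G be a graph with m edges, m̃ ≥ max{20, e^{-1/10}·m}, p = 1/m̃, and let u, v be adjacent vertices. Draw S by including each non-u, non-v vertex independently with probability p. Then the probability that the pair {u,v} is lonely in S is at least 1/25. -/

import Mathlib

open scoped Classical

/-- Neighborhood factor lower bound: for adjacent vertices `u, v` and a random set `S`
including each vertex other than `u` and `v` independently with probability `p = 1/m̃`,
the pair `{u,v}` is lonely in `S` (no edge in `S ∪ {u,v}` other than possibly `uv`)
with probability at least `1/25`. (Membership of `u, v` themselves is irrelevant to
the event, so the product is taken over all vertices.) -/
theorem neighborhood_lower_bound {V : Type*} [Fintype V] [DecidableEq V]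
    (G : SimpleGraph V) [DecidableRel G.Adj] (mt p : ℝ)
    (hmt : max 20 (Real.exp (-(1/10)) * (G.edgeFinset.card : ℝ)) ≤ mt)
    (hp : p = 1 / mt) (u v : V) (huv : G.Adj u v) :
    1 / 25 ≤ (∑ g : V → Bool,
        if (∀ a b, G.Adj a b → (g a = true ∨ a = u ∨ a = v) →
            (g b = true ∨ b = u ∨ b = v) → (a = u ∧ b = v) ∨ (a = v ∧ b = u))
          then ∏ w : V, (if g w then p else 1 - p) else 0) := by
  have hmt20 : (20 : ℝ) ≤ mt := le_trans (le_max_left _ _) hmt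
  have hmtpos : (0 : ℝ) < mt := by linarith
  have hm : Real.exp (-(1/10)) * (G.edgeFinset.card : ℝ) ≤ mt :=
    le_trans (le_max_right _ _) hmt
  have hppos : 0 < p := by rw [hp]; positivity
  have hple : p ≤ 1 / 20 := by
    rw [hp]
    exact one_div_le_one_div_of_le (by norm_num) hmt20
  have h1p : (19 : ℝ)/20 ≤ 1 - p := by linarith
  have h1ppos : 0 < 1 - p := by linarith
  -- exp(1/10) ≤ 10/9
  have hexp110 : Real.exp (1/10) ≤ 10/9 := by
    have h := Real.add_one_le_exp (-(1/10))
    rw [Real.exp_neg] at h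
    nlinarith [Real.exp_pos (1/10),
      mul_inv_cancel₀ (ne_of_gt (Real.exp_pos (1/10)))]
  -- m ≤ (10/9) * mt
  have hmbound : (G.edgeFinset.card : ℝ) ≤ (10/9) * mt := by
    have : (G.edgeFinset.card : ℝ) ≤ Real.exp (1/10) * mt := by
      have h := hm
      have he : Real.exp (-(1/10)) * Real.exp (1/10) = 1 := by
        rw [← Real.exp_add]; norm_num
      nlinarith [Real.exp_pos (-(1/10)), Real.exp_pos (1/10)]
    nlinarith [Real.exp_pos (1/10)]
  -- the set of relevant vertices
  set T : Finset V := Finset.univ.filter (fun w => ¬(w = u ∨ w = v) ∧ 0 < G.degree w)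
    with hT
  have hTcard : (T.card : ℝ) ≤ 2 * (G.edgeFinset.card : ℝ) := by
    have h1 : T.card ≤ ∑ w ∈ T, G.degree w := by
      calc T.card = ∑ _w ∈ T, 1 := by simp
        _ ≤ ∑ w ∈ T, G.degree w := by
            apply Finset.sum_le_sum
            intro w hw
            simp only [hT, Finset.mem_filter] at hw
            omega
    have h2 : ∑ w ∈ T, G.degree w ≤ ∑ w, G.degree w :=
      Finset.sum_le_sum_of_subset (Finset.subset_univ T)
    have h3 := SimpleGraph.sum_degrees_eq_twice_card_edges G
    have : T.card ≤ 2 * G.edgeFinset.card := by omega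
    exact_mod_cast this
  -- lower-bound the sum by the event that all of T is excluded
  have hstep1 : ∑ g : V → Bool,
      (if (∀ w ∈ T, g w = false) then ∏ w : V, (if g w then p else 1 - p) else 0)
      ≤ (∑ g : V → Bool,
        if (∀ a b, G.Adj a b → (g a = true ∨ a = u ∨ a = v) →
            (g b = true ∨ b = u ∨ b = v) → (a = u ∧ b = v) ∨ (a = v ∧ b = u))
          then ∏ w : V, (if g w then p else 1 - p) else 0) := by
    apply Finset.sum_le_sum
    intro g _
    by_cases hg : ∀ w ∈ T, g w = false
    · have hev : ∀ a b, G.Adj a b → (g a = true ∨ a = u ∨ a = v) →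
          (g b = true ∨ b = u ∨ b = v) → (a = u ∧ b = v) ∨ (a = v ∧ b = u) := by
        intro a b hab ha hb
        have hadeg : 0 < G.degree a := (G.degree_pos_iff_exists_adj a).mpr ⟨b, hab⟩
        have hbdeg : 0 < G.degree b := (G.degree_pos_iff_exists_adj b).mpr ⟨a, hab.symm⟩
        have ha' : a = u ∨ a = v := by
          rcases ha with h | h
          · by_contra hc
            have : a ∈ T := Finset.mem_filter.mpr ⟨Finset.mem_univ _, hc, hadeg⟩
            rw [hg a this] at h; exact Bool.false_ne_true h
          · exact h
        have hb' : b = u ∨ b = v := by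
          rcases hb with h | h
          · by_contra hc
            have : b ∈ T := Finset.mem_filter.mpr ⟨Finset.mem_univ _, hc, hbdeg⟩
            rw [hg b this] at h; exact Bool.false_ne_true h
          · exact h
        have hne : a ≠ b := G.ne_of_adj hab
        rcases ha' with rfl | rfl <;> rcases hb' with rfl | rfl <;> tauto
      rw [if_pos hg, if_pos hev]
    · rw [if_neg hg]
      split
      · refine Finset.prod_nonneg fun w _ => ?_
        split <;> linarith
      · exact le_refl 0
  -- compute the lower sum
  have hstep2 : ∑ g : V → Bool,
      (if (∀ w ∈ T, g w = false) then ∏ w : V, (if g w then p else 1 - p) else 0)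
      = (1 - p) ^ T.card := by
    have hsum : ∀ g : V → Bool,
        (if (∀ w ∈ T, g w = false) then ∏ w : V, (if g w then p else 1 - p) else 0)
        = ∏ w : V, (if w ∈ T ∧ g w then 0 else (if g w then p else 1 - p)) := by
      intro g
      by_cases hg : ∀ w ∈ T, g w = false
      · rw [if_pos hg]
        apply Finset.prod_congr rfl
        intro w _
        have : ¬ (w ∈ T ∧ g w) := by
          rintro ⟨hw1, hw2⟩
          rw [hg w hw1] at hw2; exact Bool.false_ne_true hw2
        rw [if_neg this]
      · rw [if_neg hg]
        push_neg at hg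
        obtain ⟨w, hwT, hw⟩ := hg
        have hwtrue : g w = true := by
          cases h : g w
          · exact absurd h hw
          · rfl
        refine (Finset.prod_eq_zero (Finset.mem_univ w) ?_).symm
        rw [if_pos ⟨hwT, by rw [hwtrue]⟩]
    simp_rw [hsum]
    rw [← Fintype.prod_sum (fun w (b : Bool) => if w ∈ T ∧ b then 0 else (if b then p else 1 - p))]
    have : ∀ w : V, (∑ b : Bool, if w ∈ T ∧ b then 0 else (if b then p else 1 - p))
        = if w ∈ T then 1 - p else 1 := by
      intro w
      rw [Fintype.sum_bool]
      by_cases hw : w ∈ T <;> simp [hw]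
    simp_rw [this]
    rw [Fintype.prod_ite_mem T (fun _ => 1 - p), Finset.prod_const]
  -- analytic bound: (1-p)^|T| ≥ 1/25
  have hstep3 : (1 / 25 : ℝ) ≤ (1 - p) ^ T.card := by
    have hkey : Real.exp (-(p / (1 - p))) ≤ 1 - p := by
      have h := Real.add_one_le_exp (p / (1 - p))
      have hE : 1 ≤ Real.exp (p / (1 - p)) * (1 - p) := by
        have : 1 / (1 - p) = p / (1 - p) + 1 := by field_simp; ring
        have h2 : 1 / (1 - p) ≤ Real.exp (p / (1 - p)) := this ▸ h
        rw [div_le_iff₀ h1ppos] at h2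
        linarith
      rw [Real.exp_neg]
      nlinarith [mul_inv_cancel₀ (ne_of_gt (Real.exp_pos (p / (1 - p)))),
        inv_pos.mpr (Real.exp_pos (p / (1 - p)))]
    have hpow : Real.exp (-((T.card : ℝ) * (p / (1 - p)))) ≤ (1 - p) ^ T.card := by
      calc Real.exp (-((T.card : ℝ) * (p / (1 - p))))
          = Real.exp (-(p / (1 - p))) ^ T.card := by
            rw [← Real.exp_nat_mul]; ring_nf
        _ ≤ (1 - p) ^ T.card := pow_le_pow_left₀ (Real.exp_pos _).le hkey _
    have harg : (T.card : ℝ) * (p / (1 - p)) ≤ 3 := by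
      have hTp : (T.card : ℝ) * p ≤ 20 / 9 := by
        rw [hp, mul_one_div, div_le_iff₀ hmtpos]
        nlinarith
      rw [mul_div_assoc', div_le_iff₀ h1ppos]
      linarith
    have hexp3 : Real.exp (3 : ℝ) ≤ 25 := by
      have h1 : Real.exp 1 < 2.7182818286 := Real.exp_one_lt_d9
      have : Real.exp 3 = (Real.exp 1) ^ 3 := by
        rw [← Real.exp_nat_mul]; norm_num
      rw [this]
      have := pow_le_pow_left₀ (Real.exp_pos 1).le h1.le 3
      nlinarith
    have : (1 / 25 : ℝ) ≤ Real.exp (-((T.card : ℝ) * (p / (1 - p)))) := by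
      have h25 : Real.exp ((T.card : ℝ) * (p / (1 - p))) ≤ 25 :=
        le_trans (Real.exp_le_exp.mpr harg) hexp3
      rw [Real.exp_neg, ← one_div]
      exact one_div_le_one_div_of_le (Real.exp_pos _) h25
    linarith [hpow]
  linarith [hstep1, hstep2, hstep3]
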